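/- Let G1 = (V, E1, S1, P1) and G2 = (V, E2, S2, P2) be uncertain signed graphs with E1 ⊆ E2 and with S2, P2 restricting to S1, P1 on E1. Then R_bal(G1) ≥ R_bal(G2). -/

import Mathlib

open SimpleGraph Finset

variable {V : Type*}

/-- A signed graph `(G, σ)` (with `σ e = true` meaning the edge `e` is positive)
has no negative cycle: no cycle has an odd number of negative edges. -/
def NoNegCycle (G : SimpleGraph V) (σ : Sym2 V → Bool) : Prop :=
  ∀ (u : V) (w : G.Walk u u), w.IsCycle →
    ¬ Odd ((w.edges.filter fun e => σ e = false).length)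

/- The edge set of `G` as a `Finset`. -/
open scoped Classical in
noncomputable def edgeFS [Fintype V] (G : SimpleGraph V) : Finset (Sym2 V) :=
  Finset.univ.filter (· ∈ G.edgeSet)

/- The balance rate of an uncertain signed graph: the probability, when each edge `e`
exists independently with probability `p e`, that the realized signed graph is balanced
(contains no negative cycle). -/
open scoped Classical in
noncomputable def Rbal [Fintype V] (G : SimpleGraph V) (σ : Sym2 V → Bool)
    (p : Sym2 V → ℝ) : ℝ :=
  ∑ S ∈ (edgeFS G).powerset,
    ((∏ e ∈ S, p e) * ∏ e ∈ edgeFS G \ S, (1 - p e)) *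
      (if NoNegCycle (SimpleGraph.fromEdgeSet (↑S : Set (Sym2 V))) σ then 1 else 0)

/-- Balance is monotone under subgraphs. -/
lemma noNegCycle_mono {G H : SimpleGraph V} (hGH : G ≤ H) {σ : Sym2 V → Bool}
    (hH : NoNegCycle H σ) : NoNegCycle G σ := by
  intro u w hc
  have hedges : ∀ e ∈ w.edges, e ∈ H.edgeSet := fun e he =>
    SimpleGraph.edgeSet_mono hGH (w.edges_subset_edgeSet he)
  have := hH u (w.transfer H hedges) (hc.transfer hedges)
  rwa [SimpleGraph.Walk.edges_transfer] at this

lemma sum_powerset_union_disj {α : Type*} [DecidableEq α] (s t : Finset α) (hst : Disjoint s t)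
    (g : Finset α → ℝ) :
    ∑ S ∈ (s ∪ t).powerset, g S = ∑ a ∈ s.powerset, ∑ b ∈ t.powerset, g (a ∪ b) := by
  rw [← Finset.sum_product']
  refine Finset.sum_nbij' (fun S => (S ∩ s, S ∩ t)) (fun P => P.1 ∪ P.2) ?_ ?_ ?_ ?_ ?_
  · intro S hS
    simp only [Finset.mem_product, Finset.mem_powerset]
    exact ⟨Finset.inter_subset_right, Finset.inter_subset_right⟩
  · intro P hP
    simp only [Finset.mem_product, Finset.mem_powerset] at hP ⊢
    exact Finset.union_subset_union hP.1 hP.2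
  · intro S hS
    simp only [Finset.mem_powerset] at hS
    dsimp only
    rw [← Finset.inter_union_distrib_left, Finset.inter_eq_left.2 hS]
  · intro P hP
    simp only [Finset.mem_product, Finset.mem_powerset] at hP
    have h1 : (P.1 ∪ P.2) ∩ s = P.1 := by
      have h2s : P.2 ∩ s = ∅ := Finset.eq_empty_of_forall_notMem fun x hx => by
        have := Finset.mem_inter.mp hx
        exact (Finset.disjoint_right.mp hst (hP.2 this.1)) this.2
      rw [Finset.union_inter_distrib_right, Finset.inter_eq_left.2 hP.1, h2s]
      simp
    have h2 : (P.1 ∪ P.2) ∩ t = P.2 := by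
      have h1t : P.1 ∩ t = ∅ := Finset.eq_empty_of_forall_notMem fun x hx => by
        have := Finset.mem_inter.mp hx
        exact (Finset.disjoint_left.mp hst (hP.1 this.1)) this.2
      rw [Finset.union_inter_distrib_right, Finset.inter_eq_left.2 hP.2, h1t]
      simp
    rw [h1, h2]
  · intro S hS
    simp only [Finset.mem_powerset] at hS
    dsimp only
    rw [← Finset.inter_union_distrib_left, Finset.inter_eq_left.2 hS]

/-- If `G1 ⊆ G2` (same vertex set, `E1 ⊆ E2`), the signs agree, and the probabilities
agree on the edges of `G1`, then `R_bal(G1) ≥ R_bal(G2)`. -/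
theorem stmt12 [Fintype V] (G1 G2 : SimpleGraph V) (σ : Sym2 V → Bool)
    (p1 p2 : Sym2 V → ℝ) (hle : G1 ≤ G2)
    (hagree : ∀ e ∈ G1.edgeSet, p2 e = p1 e)
    (hp10 : ∀ e, 0 ≤ p1 e) (hp11 : ∀ e, p1 e ≤ 1)
    (hp20 : ∀ e, 0 ≤ p2 e) (hp21 : ∀ e, p2 e ≤ 1) :
    Rbal G2 σ p2 ≤ Rbal G1 σ p1 := by
  classical
  set E1 := edgeFS G1 with hE1
  set E2 := edgeFS G2 with hE2
  have hsub : E1 ⊆ E2 := by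
    intro e he
    simp only [hE1, hE2, edgeFS, Finset.mem_filter] at he ⊢
    exact ⟨he.1, SimpleGraph.edgeSet_mono hle he.2⟩
  set D := E2 \ E1 with hD
  have hdisj : Disjoint E1 D := Finset.disjoint_sdiff
  have hE2eq : E1 ∪ D = E2 := Finset.union_sdiff_of_subset hsub
  have hagree' : ∀ e ∈ E1, p2 e = p1 e := by
    intro e he
    simp only [hE1, edgeFS, Finset.mem_filter] at he
    exact hagree e he.2
  -- rewrite Rbal G2 as a double sum
  have key : Rbal G2 σ p2 =
      ∑ A ∈ E1.powerset, ∑ B ∈ D.powerset,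
        (((∏ e ∈ A, p1 e) * ∏ e ∈ E1 \ A, (1 - p1 e)) *
         ((∏ e ∈ B, p2 e) * ∏ e ∈ D \ B, (1 - p2 e))) *
          (if NoNegCycle (SimpleGraph.fromEdgeSet (↑(A ∪ B) : Set (Sym2 V))) σ
            then 1 else 0) := by
    have hrw := sum_powerset_union_disj E1 D hdisj (fun S =>
      ((∏ e ∈ S, p2 e) * ∏ e ∈ (E1 ∪ D) \ S, (1 - p2 e)) *
        (if NoNegCycle (SimpleGraph.fromEdgeSet (↑S : Set (Sym2 V))) σ then 1 else 0))
    rw [Rbal, ← hE2, ← hE2eq]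
    refine hrw.trans ?_
    refine Finset.sum_congr rfl fun A hA => Finset.sum_congr rfl fun B hB => ?_
    simp only [Finset.mem_powerset] at hA hB
    have hAB : Disjoint A B := hdisj.mono hA hB
    have hsplit : (E1 ∪ D) \ (A ∪ B) = (E1 \ A) ∪ (D \ B) := by
      ext x
      simp only [Finset.mem_sdiff, Finset.mem_union, not_or]
      constructor
      · rintro ⟨hx1 | hx1, hx2, hx3⟩
        · exact Or.inl ⟨hx1, hx2⟩
        · exact Or.inr ⟨hx1, hx3⟩
      · rintro (⟨hx1, hx2⟩ | ⟨hx1, hx2⟩)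
        · exact ⟨Or.inl hx1, hx2, fun h => Finset.disjoint_left.mp hdisj hx1 (hB h)⟩
        · exact ⟨Or.inr hx1, fun h => Finset.disjoint_right.mp hdisj hx1 (hA h), hx2⟩
    have hdisj2 : Disjoint (E1 \ A) (D \ B) :=
      hdisj.mono Finset.sdiff_subset Finset.sdiff_subset
    rw [hsplit, Finset.prod_union hAB, Finset.prod_union hdisj2]
    have e1 : ∏ e ∈ A, p2 e = ∏ e ∈ A, p1 e :=
      Finset.prod_congr rfl fun e he => hagree' e (hA he)
    have e2 : ∏ e ∈ E1 \ A, (1 - p2 e) = ∏ e ∈ E1 \ A, (1 - p1 e) :=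
      Finset.prod_congr rfl fun e he =>
        by rw [hagree' e (Finset.sdiff_subset he)]
    rw [e1, e2]; ring
  rw [key]
  have step : ∀ A ∈ E1.powerset, ∀ B ∈ D.powerset,
      (((∏ e ∈ A, p1 e) * ∏ e ∈ E1 \ A, (1 - p1 e)) *
       ((∏ e ∈ B, p2 e) * ∏ e ∈ D \ B, (1 - p2 e))) *
        (if NoNegCycle (SimpleGraph.fromEdgeSet (↑(A ∪ B) : Set (Sym2 V))) σ
          then 1 else 0) ≤
      (((∏ e ∈ A, p1 e) * ∏ e ∈ E1 \ A, (1 - p1 e)) *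
       ((∏ e ∈ B, p2 e) * ∏ e ∈ D \ B, (1 - p2 e))) *
        (if NoNegCycle (SimpleGraph.fromEdgeSet (↑A : Set (Sym2 V))) σ
          then 1 else 0) := by
    intro A hA B hB
    have hw1 : 0 ≤ (∏ e ∈ A, p1 e) * ∏ e ∈ E1 \ A, (1 - p1 e) :=
      mul_nonneg (Finset.prod_nonneg fun e _ => hp10 e)
        (Finset.prod_nonneg fun e _ => by linarith [hp11 e])
    have hw2 : 0 ≤ (∏ e ∈ B, p2 e) * ∏ e ∈ D \ B, (1 - p2 e) :=
      mul_nonneg (Finset.prod_nonneg fun e _ => hp20 e)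
        (Finset.prod_nonneg fun e _ => by linarith [hp21 e])
    refine mul_le_mul_of_nonneg_left ?_ (mul_nonneg hw1 hw2)
    have hmono : SimpleGraph.fromEdgeSet (↑A : Set (Sym2 V)) ≤
        SimpleGraph.fromEdgeSet (↑(A ∪ B) : Set (Sym2 V)) := by
      apply SimpleGraph.fromEdgeSet_mono
      intro x hx
      simp only [Finset.coe_union, Set.mem_union]
      exact Or.inl hx
    by_cases h : NoNegCycle (SimpleGraph.fromEdgeSet (↑(A ∪ B) : Set (Sym2 V))) σ
    · simp only [h, if_true]
      have : NoNegCycle (SimpleGraph.fromEdgeSet (↑A : Set (Sym2 V))) σ :=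
        noNegCycle_mono hmono h
      simp [this]
    · simp only [h, if_false]
      split <;> norm_num
  calc ∑ A ∈ E1.powerset, ∑ B ∈ D.powerset,
        (((∏ e ∈ A, p1 e) * ∏ e ∈ E1 \ A, (1 - p1 e)) *
         ((∏ e ∈ B, p2 e) * ∏ e ∈ D \ B, (1 - p2 e))) *
          (if NoNegCycle (SimpleGraph.fromEdgeSet (↑(A ∪ B) : Set (Sym2 V))) σ
            then 1 else 0)
      ≤ ∑ A ∈ E1.powerset, ∑ B ∈ D.powerset,
        (((∏ e ∈ A, p1 e) * ∏ e ∈ E1 \ A, (1 - p1 e)) *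
         ((∏ e ∈ B, p2 e) * ∏ e ∈ D \ B, (1 - p2 e))) *
          (if NoNegCycle (SimpleGraph.fromEdgeSet (↑A : Set (Sym2 V))) σ
            then 1 else 0) := by
        refine Finset.sum_le_sum fun A hA => Finset.sum_le_sum fun B hB => ?_
        exact step A hA B hB
    _ = Rbal G1 σ p1 := by
        have hone : ∑ B ∈ D.powerset, (∏ e ∈ B, p2 e) * ∏ e ∈ D \ B, (1 - p2 e) = 1 := by
          rw [← Finset.prod_add]
          simp
        rw [Rbal, ← hE1]
        refine Finset.sum_congr rfl fun A hA => ?_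
        rw [← Finset.sum_mul]
        congr 1
        rw [← Finset.mul_sum, hone, mul_one]
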